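/- There exists a 4-simplex in Euclidean 4-space that is both equiareal (all five facets have equal 3-dimensional volume) and equiradial (all five facets have equal circumradius) but is not equifacetal (not all facets are congruent). -/

import Mathlib

/-
Common geometric notions for simplices in Euclidean d-space, following
Edmonds–Hajja–Martini, "Coincidences of simplex centers and related facial
structures".  A d-simplex is given by its d+1 affinely independent vertices
`A : Fin (d+1) → EuclideanSpace ℝ (Fin d)`.
-/

noncomputable section

abbrev Pt (d : ℕ) : Type := EuclideanSpace ℝ (Fin d)

variable {d : ℕ}

/-- The centroid of the simplex with vertices `A`: the average of the vertices. -/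
def ctr (A : Fin (d+1) → Pt d) : Pt d := Finset.centroid ℝ Finset.univ A

/-- `C` is a circumcenter of the simplex with vertices `A`:
it is equidistant from all the vertices. -/
def IsCircumcenter (A : Fin (d+1) → Pt d) (C : Pt d) : Prop :=
  ∃ r : ℝ, ∀ i, dist C (A i) = r

/-- The affine span (hyperplane) of the facet opposite to vertex `j`. -/
def facetSpan (A : Fin (d+1) → Pt d) (j : Fin (d+1)) : Set (Pt d) :=
  (affineSpan ℝ (A '' {i | i ≠ j}) : Set (Pt d))

/-- `I` is the incenter of the simplex with vertices `A`: an interior point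
equidistant from the affine hyperplanes spanned by the facets. -/
def IsIncenter (A : Fin (d+1) → Pt d) (I : Pt d) : Prop :=
  I ∈ interior (convexHull ℝ (Set.range A)) ∧
    ∃ r : ℝ, ∀ j, Metric.infDist I (facetSpan A j) = r

/-- `F` is a Fermat-Torricelli point of the simplex with vertices `A`:
it minimizes the sum of the distances to the vertices. -/
def IsFermatPoint (A : Fin (d+1) → Pt d) (F : Pt d) : Prop :=
  ∀ Q : Pt d, ∑ i, dist F (A i) ≤ ∑ i, dist Q (A i)

/-- The altitude of the simplex at vertex `j`: the distance from `A j` to the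
affine span of the opposite facet. -/
def altitude (A : Fin (d+1) → Pt d) (j : Fin (d+1)) : ℝ :=
  Metric.infDist (A j) (facetSpan A j)

/-- Equiareal: all facets have the same `(d-1)`-dimensional volume; equivalently
(since `d · vol S = facet volume · altitude`), all altitudes are equal. -/
def Equiareal (A : Fin (d+1) → Pt d) : Prop :=
  ∀ j k, altitude A j = altitude A k

/-- `r` is the circumradius of the facet opposite `j`: some point of the affine
span of the facet is at distance `r` from all its vertices. -/
def IsFacetCircumradius (A : Fin (d+1) → Pt d) (j : Fin (d+1)) (r : ℝ) : Prop :=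
  ∃ C ∈ affineSpan ℝ (A '' {i | i ≠ j}), ∀ i, i ≠ j → dist C (A i) = r

/-- Equiradial: all facets have the same circumradius. -/
def Equiradial (A : Fin (d+1) → Pt d) : Prop :=
  ∃ r : ℝ, ∀ j, IsFacetCircumradius A j r

/-- Equifacetal: any two facets are congruent, i.e. there is an isometry of the
ambient space carrying the vertex set of one facet onto that of the other. -/
def Equifacetal (A : Fin (d+1) → Pt d) : Prop :=
  ∀ j k, ∃ f : Pt d ≃ᵢ Pt d, f '' (A '' {i | i ≠ j}) = A '' {i | i ≠ k}

/-- Regular: all edges have equal length. -/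
def Regular (A : Fin (d+1) → Pt d) : Prop :=
  ∀ i j k l, i ≠ j → k ≠ l → dist (A i) (A j) = dist (A k) (A l)


open scoped RealInnerProductSpace

namespace EHM

def s : ℝ := Real.sqrt 6
lemma hs : s ^ 2 = 6 := Real.sq_sqrt (by norm_num)
lemma s_nonneg : 0 ≤ s := Real.sqrt_nonneg 6
lemma s_gt : 2 < s := by nlinarith [hs, s_nonneg]
lemma s_lt : s < 5/2 := by nlinarith [hs, s_nonneg]

def u : ℝ := (s - 2)/2
lemma u_pos : 0 < u := by have := s_gt; rw [u]; linarith
lemma hu2 : u^2 = (10 - 4*s)/4 := by rw [u]; linear_combination (1/4 : ℝ) * hs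

def ω : ℝ := Real.sqrt ((21 - 6*s)/10)
lemma harg : 0 < (21 - 6*s)/10 := by have := s_lt; linarith
lemma hw : ω ^ 2 = (21 - 6*s)/10 := Real.sq_sqrt harg.le
lemma ω_pos : 0 < ω := Real.sqrt_pos.mpr harg

@[simp] lemma vec4_2 {α : Type*} (a b c d : α) : ![a,b,c,d] 2 = c := rfl
@[simp] lemma vec4_3 {α : Type*} (a b c d : α) : ![a,b,c,d] 3 = d := rfl
@[simp] lemma vec5_2 {α : Type*} (a b c d e : α) : ![a,b,c,d,e] 2 = c := rfl
@[simp] lemma vec5_3 {α : Type*} (a b c d e : α) : ![a,b,c,d,e] 3 = d := rfl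
@[simp] lemma vec5_4 {α : Type*} (a b c d e : α) : ![a,b,c,d,e] 4 = e := rfl

def P0 : Pt 4 := !₂[1, 0, u, 0]
def P1 : Pt 4 := !₂[-1, 0, u, 0]
def P2 : Pt 4 := !₂[0, 1, -u, 0]
def P3 : Pt 4 := !₂[0, -1, -u, 0]
def P4 : Pt 4 := !₂[0, 0, 0, ω]

def A : Fin 5 → Pt 4 := ![P0, P1, P2, P3, P4]

lemma dist_pt (x y : Pt 4) : dist x y =
    Real.sqrt ((x 0 - y 0)^2 + (x 1 - y 1)^2 + (x 2 - y 2)^2 + (x 3 - y 3)^2) := by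
  rw [EuclideanSpace.dist_eq]
  congr 1
  simp [Fin.sum_univ_four, Real.dist_eq, sq_abs]

lemma dist_sq (x y : Pt 4) : dist x y ^ 2 =
    (x 0 - y 0)^2 + (x 1 - y 1)^2 + (x 2 - y 2)^2 + (x 3 - y 3)^2 := by
  rw [dist_pt, Real.sq_sqrt (by positivity)]

lemma norm_pt (x : Pt 4) : ‖x‖ =
    Real.sqrt ((x 0)^2 + (x 1)^2 + (x 2)^2 + (x 3)^2) := by
  rw [EuclideanSpace.norm_eq]
  congr 1
  simp [Fin.sum_univ_four, Real.norm_eq_abs, sq_abs]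

lemma inner_pt (x y : Pt 4) : ⟪x, y⟫ = x 0 * y 0 + x 1 * y 1 + x 2 * y 2 + x 3 * y 3 := by
  simp [PiLp.inner_apply, RCLike.inner_apply, Fin.sum_univ_four, mul_comm]

def cmb (c1 c2 c3 : ℝ) (p1 p2 p3 b : Pt 4) : Pt 4 :=
  c1 • (p1 -ᵥ b) +ᵥ (c2 • (p2 -ᵥ b) +ᵥ (c3 • (p3 -ᵥ b) +ᵥ b))

lemma cmb_apply (c1 c2 c3 : ℝ) (p1 p2 p3 b : Pt 4) (k : Fin 4) :
    cmb c1 c2 c3 p1 p2 p3 b k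
      = c1 * (p1 k - b k) + (c2 * (p2 k - b k) + (c3 * (p3 k - b k) + b k)) := by
  simp [cmb, vsub_eq_sub, vadd_eq_add]

lemma mem_fs {j i : Fin 5} (h : i ≠ j) : A i ∈ affineSpan ℝ (A '' {i | i ≠ j}) :=
  subset_affineSpan ℝ _ ⟨i, h, rfl⟩

lemma cmb_mem {j : Fin 5} {i1 i2 i3 i4 : Fin 5} (h1 : i1 ≠ j) (h2 : i2 ≠ j) (h3 : i3 ≠ j)
    (h4 : i4 ≠ j) (c1 c2 c3 : ℝ) :
    cmb c1 c2 c3 (A i1) (A i2) (A i3) (A i4) ∈ affineSpan ℝ (A '' {i | i ≠ j}) :=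
  AffineSubspace.smul_vsub_vadd_mem _ c1 (mem_fs h1) (mem_fs h4)
    (AffineSubspace.smul_vsub_vadd_mem _ c2 (mem_fs h2) (mem_fs h4)
      (AffineSubspace.smul_vsub_vadd_mem _ c3 (mem_fs h3) (mem_fs h4) (mem_fs h4)))

lemma A_indep : AffineIndependent ℝ A := by
  rw [affineIndependent_iff_of_fintype]
  intro w hw0 hws
  rw [Finset.weightedVSub_eq_linear_combination _ hw0] at hws
  have hc : ∀ k : Fin 4, (w 0) * (A 0 k) + (w 1) * (A 1 k) + (w 2) * (A 2 k)
      + (w 3) * (A 3 k) + (w 4) * (A 4 k) = 0 := by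
    intro k
    have := congrArg (fun v : Pt 4 => v k) hws
    simpa [Fin.sum_univ_five, PiLp.smul_apply, smul_eq_mul, add_assoc] using this
  have h0 := hc 0; have h1 := hc 1; have h2 := hc 2; have h3 := hc 3
  simp only [A, P0, P1, P2, P3, P4, Matrix.cons_val_zero, Matrix.cons_val_one,
    Matrix.head_cons, Matrix.cons_val_two, Matrix.cons_val_three, Matrix.cons_val_four,
    Matrix.tail_cons, Matrix.cons_val_fin_one, PiLp.toLp_apply] at h0 h1 h2 h3
  rw [Fin.sum_univ_five] at hw0
  have e2 : (w 0 + w 1 - w 2 - w 3) * u = 0 := by linear_combination h2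
  have e3 : w 4 * ω = 0 := by linear_combination h3
  have e2' : w 0 + w 1 - w 2 - w 3 = 0 :=
    (mul_eq_zero.mp e2).resolve_right u_pos.ne'
  have e3' : w 4 = 0 := (mul_eq_zero.mp e3).resolve_right ω_pos.ne'
  have l0 : w 0 = 0 := by linarith
  have l1 : w 1 = 0 := by linarith
  have l2 : w 2 = 0 := by linarith
  have l3 : w 3 = 0 := by linarith
  intro i
  fin_cases i <;> [exact l0; exact l1; exact l2; exact l3; exact e3']

lemma altitude_eq {j : Fin 5} (n fp : Pt 4) (c nn : ℝ) (hnn : 0 < nn)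
    (hfacet : ∀ i, i ≠ j → ⟪n, A i⟫ = c)
    (hnorm : ‖n‖ = nn)
    (hAj : ⟪n, A j⟫ - c = nn * ω)
    (hfm : fp ∈ affineSpan ℝ (A '' {i | i ≠ j}))
    (hfd : dist (A j) fp = ω) :
    altitude A j = ω := by
  refine le_antisymm ?_ ?_
  · rw [altitude, facetSpan]
    exact (Metric.infDist_le_dist_of_mem hfm).trans hfd.le
  · rw [altitude, facetSpan, Metric.infDist_eq_iInf]
    have hne : Nonempty ((affineSpan ℝ (A '' {i | i ≠ j}) : Set (Pt 4))) := ⟨⟨fp, hfm⟩⟩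
    refine le_ciInf fun z => ?_
    obtain ⟨y, hy⟩ := z
    have hy' : y ∈ affineSpan ℝ (A '' {i | i ≠ j}) := hy
    have hyc : ⟪n, y⟫ = c := by
      refine affineSpan_induction (p := fun x => ⟪n, x⟫ = c) hy' ?_ ?_
      · rintro x ⟨i, hi, rfl⟩; exact hfacet i hi
      · intro t p q r hp hq hr
        simp only [vadd_eq_add, vsub_eq_sub, inner_add_right, inner_sub_right,
          real_inner_smul_right, hp, hq, hr]
        ring
    have hCS := abs_real_inner_le_norm n (A j - y)
    rw [inner_sub_right, hyc, hnorm] at hCS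
    have h1 : nn * ω ≤ nn * dist (A j) y := by
      calc nn * ω = ⟪n, A j⟫ - c := hAj.symm
        _ ≤ |⟪n, A j⟫ - c| := le_abs_self _
        _ ≤ nn * ‖A j - y‖ := hCS
        _ = nn * dist (A j) y := by rw [dist_eq_norm]
    exact le_of_mul_le_mul_left h1 hnn

lemma norm_eq_of_sq {x : Pt 4} {a : ℝ} (ha : 0 ≤ a)
    (h : (x 0)^2 + (x 1)^2 + (x 2)^2 + (x 3)^2 = a^2) : ‖x‖ = a := by
  rw [norm_pt, h, Real.sqrt_sq ha]

lemma dist_eq_of_sq {x y : Pt 4} {a : ℝ} (ha : 0 ≤ a)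
    (h : (x 0 - y 0)^2 + (x 1 - y 1)^2 + (x 2 - y 2)^2 + (x 3 - y 3)^2 = a^2) :
    dist x y = a := by
  rw [dist_pt, h, Real.sqrt_sq ha]

lemma u4_nonneg : (0:ℝ) ≤ 4 * u := by nlinarith [u_pos]

lemma alt0 : altitude A 0 = ω := by
  refine altitude_eq (!₂[2*u*ω, 0, ω, -u] : Pt 4)
    (cmb ((1-6*s)/20) ((7+3*s)/20) ((7+3*s)/20) (A 1) (A 2) (A 3) (A 4))
    (-(u*ω)) (4*u) (by nlinarith [u_pos]) ?_ ?_ ?_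
    (cmb_mem (by decide) (by decide) (by decide) (by decide) _ _ _) ?_
  · intro i hi
    fin_cases i
    · exact absurd rfl hi
    all_goals (rw [inner_pt]; norm_num [A, P0, P1, P2, P3, P4]; try ring)
  · refine norm_eq_of_sq u4_nonneg ?_
    norm_num [u]
    linear_combination ((3/4:ℝ) + (-3/5:ℝ)*s) * hs + ((5:ℝ) + (-4:ℝ)*s + s^2) * hw
  · rw [inner_pt]; norm_num [A, P0]; ring
  · refine dist_eq_of_sq ω_pos.le ?_
    norm_num [A, P0, P1, P2, P3, P4, cmb_apply, u]
    linear_combination ((-99/320:ℝ) + (27/200:ℝ)*s + (9/100:ℝ)*s^2) * hs + ((-15/16:ℝ)) * hw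

lemma alt1 : altitude A 1 = ω := by
  refine altitude_eq (!₂[-(2*u*ω), 0, ω, -u] : Pt 4)
    (cmb ((1-6*s)/20) ((7+3*s)/20) ((7+3*s)/20) (A 0) (A 2) (A 3) (A 4))
    (-(u*ω)) (4*u) (by nlinarith [u_pos]) ?_ ?_ ?_
    (cmb_mem (by decide) (by decide) (by decide) (by decide) _ _ _) ?_
  · intro i hi
    fin_cases i
    · rw [inner_pt]; norm_num [A, P0, P1, P2, P3, P4]; try ring
    · exact absurd rfl hi
    all_goals (rw [inner_pt]; norm_num [A, P0, P1, P2, P3, P4]; try ring)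
  · refine norm_eq_of_sq u4_nonneg ?_
    norm_num [u]
    linear_combination ((3/4:ℝ) + (-3/5:ℝ)*s) * hs + ((5:ℝ) + (-4:ℝ)*s + s^2) * hw
  · rw [inner_pt]; norm_num [A, P1]; ring
  · refine dist_eq_of_sq ω_pos.le ?_
    norm_num [A, P0, P1, P2, P3, P4, cmb_apply, u]
    linear_combination ((-99/320:ℝ) + (27/200:ℝ)*s + (9/100:ℝ)*s^2) * hs + ((-15/16:ℝ)) * hw

lemma alt2 : altitude A 2 = ω := by
  refine altitude_eq (!₂[0, 2*u*ω, -ω, -u] : Pt 4)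
    (cmb ((7+3*s)/20) ((7+3*s)/20) ((1-6*s)/20) (A 0) (A 1) (A 3) (A 4))
    (-(u*ω)) (4*u) (by nlinarith [u_pos]) ?_ ?_ ?_
    (cmb_mem (by decide) (by decide) (by decide) (by decide) _ _ _) ?_
  · intro i hi
    fin_cases i
    · rw [inner_pt]; norm_num [A, P0, P1, P2, P3, P4]; try ring
    · rw [inner_pt]; norm_num [A, P0, P1, P2, P3, P4]; try ring
    · exact absurd rfl hi
    all_goals (rw [inner_pt]; norm_num [A, P0, P1, P2, P3, P4]; try ring)
  · refine norm_eq_of_sq u4_nonneg ?_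
    norm_num [u]
    linear_combination ((3/4:ℝ) + (-3/5:ℝ)*s) * hs + ((5:ℝ) + (-4:ℝ)*s + s^2) * hw
  · rw [inner_pt]; norm_num [A, P2]; ring
  · refine dist_eq_of_sq ω_pos.le ?_
    norm_num [A, P0, P1, P2, P3, P4, cmb_apply, u]
    linear_combination ((-99/320:ℝ) + (27/200:ℝ)*s + (9/100:ℝ)*s^2) * hs + ((-15/16:ℝ)) * hw

lemma alt3 : altitude A 3 = ω := by
  refine altitude_eq (!₂[0, -(2*u*ω), -ω, -u] : Pt 4)
    (cmb ((7+3*s)/20) ((7+3*s)/20) ((1-6*s)/20) (A 0) (A 1) (A 2) (A 4))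
    (-(u*ω)) (4*u) (by nlinarith [u_pos]) ?_ ?_ ?_
    (cmb_mem (by decide) (by decide) (by decide) (by decide) _ _ _) ?_
  · intro i hi
    fin_cases i
    · rw [inner_pt]; norm_num [A, P0, P1, P2, P3, P4]; try ring
    · rw [inner_pt]; norm_num [A, P0, P1, P2, P3, P4]; try ring
    · rw [inner_pt]; norm_num [A, P0, P1, P2, P3, P4]; try ring
    · exact absurd rfl hi
    · rw [inner_pt]; norm_num [A, P0, P1, P2, P3, P4]; try ring
  · refine norm_eq_of_sq u4_nonneg ?_
    norm_num [u]
    linear_combination ((3/4:ℝ) + (-3/5:ℝ)*s) * hs + ((5:ℝ) + (-4:ℝ)*s + s^2) * hw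
  · rw [inner_pt]; norm_num [A, P3]; ring
  · refine dist_eq_of_sq ω_pos.le ?_
    norm_num [A, P0, P1, P2, P3, P4, cmb_apply, u]
    linear_combination ((-99/320:ℝ) + (27/200:ℝ)*s + (9/100:ℝ)*s^2) * hs + ((-15/16:ℝ)) * hw

lemma alt4 : altitude A 4 = ω := by
  refine altitude_eq (!₂[0, 0, 0, 1] : Pt 4)
    (cmb (1/4) (1/4) (1/4) (A 0) (A 1) (A 2) (A 3))
    0 1 one_pos ?_ ?_ ?_
    (cmb_mem (by decide) (by decide) (by decide) (by decide) _ _ _) ?_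
  · intro i hi
    fin_cases i
    · rw [inner_pt]; norm_num [A, P0, P1, P2, P3, P4]
    · rw [inner_pt]; norm_num [A, P0, P1, P2, P3, P4]
    · rw [inner_pt]; norm_num [A, P0, P1, P2, P3, P4]
    · rw [inner_pt]; norm_num [A, P0, P1, P2, P3, P4]
    · exact absurd rfl hi
  · refine norm_eq_of_sq one_pos.le ?_
    norm_num
  · rw [inner_pt]; norm_num [A, P4]
  · refine dist_eq_of_sq ω_pos.le ?_
    norm_num [A, P0, P1, P2, P3, P4, cmb_apply, u]
    try ring

lemma A_equiareal : Equiareal A := by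
  have key : ∀ j, altitude A j = ω := by
    intro j
    fin_cases j
    · exact alt0
    · exact alt1
    · exact alt2
    · exact alt3
    · exact alt4
  intro j k
  rw [key j, key k]

def r : ℝ := Real.sqrt ((7 - 2*s)/2)
lemma hr_arg : (0:ℝ) < (7 - 2*s)/2 := by have := s_lt; linarith
lemma hr2 : r ^ 2 = (7 - 2*s)/2 := Real.sq_sqrt hr_arg.le
lemma r_pos : 0 < r := Real.sqrt_pos.mpr hr_arg

lemma A_equiradial : Equiradial A := by
  refine ⟨r, fun j => ?_⟩
  fin_cases j
  · refine ⟨cmb ((7-2*s)/20) ((9+s)/20) ((9+s)/20) (A 1) (A 2) (A 3) (A 4),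
      cmb_mem (by decide) (by decide) (by decide) (by decide) _ _ _, ?_⟩
    intro i hi
    fin_cases i
    · exact absurd rfl hi
    · refine dist_eq_of_sq r_pos.le ?_
      norm_num [A, P0, P1, P2, P3, P4, cmb_apply, u]
      linear_combination ((29/320:ℝ) + (23/200:ℝ)*s + (1/100:ℝ)*s^2) * hs + ((1/16:ℝ)) * hw - hr2
    · refine dist_eq_of_sq r_pos.le ?_
      norm_num [A, P0, P1, P2, P3, P4, cmb_apply, u]
      linear_combination ((109/320:ℝ) + (-17/200:ℝ)*s + (1/100:ℝ)*s^2) * hs + ((1/16:ℝ)) * hw - hr2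
    · refine dist_eq_of_sq r_pos.le ?_
      norm_num [A, P0, P1, P2, P3, P4, cmb_apply, u]
      linear_combination ((109/320:ℝ) + (-17/200:ℝ)*s + (1/100:ℝ)*s^2) * hs + ((1/16:ℝ)) * hw - hr2
    · refine dist_eq_of_sq r_pos.le ?_
      norm_num [A, P0, P1, P2, P3, P4, cmb_apply, u]
      linear_combination ((-11/320:ℝ) + (3/200:ℝ)*s + (1/100:ℝ)*s^2) * hs + ((25/16:ℝ)) * hw - hr2
  · refine ⟨cmb ((7-2*s)/20) ((9+s)/20) ((9+s)/20) (A 0) (A 2) (A 3) (A 4),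
      cmb_mem (by decide) (by decide) (by decide) (by decide) _ _ _, ?_⟩
    intro i hi
    fin_cases i
    · refine dist_eq_of_sq r_pos.le ?_
      norm_num [A, P0, P1, P2, P3, P4, cmb_apply, u]
      linear_combination ((29/320:ℝ) + (23/200:ℝ)*s + (1/100:ℝ)*s^2) * hs + ((1/16:ℝ)) * hw - hr2
    · exact absurd rfl hi
    · refine dist_eq_of_sq r_pos.le ?_
      norm_num [A, P0, P1, P2, P3, P4, cmb_apply, u]
      linear_combination ((109/320:ℝ) + (-17/200:ℝ)*s + (1/100:ℝ)*s^2) * hs + ((1/16:ℝ)) * hw - hr2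
    · refine dist_eq_of_sq r_pos.le ?_
      norm_num [A, P0, P1, P2, P3, P4, cmb_apply, u]
      linear_combination ((109/320:ℝ) + (-17/200:ℝ)*s + (1/100:ℝ)*s^2) * hs + ((1/16:ℝ)) * hw - hr2
    · refine dist_eq_of_sq r_pos.le ?_
      norm_num [A, P0, P1, P2, P3, P4, cmb_apply, u]
      linear_combination ((-11/320:ℝ) + (3/200:ℝ)*s + (1/100:ℝ)*s^2) * hs + ((25/16:ℝ)) * hw - hr2
  · refine ⟨cmb ((9+s)/20) ((9+s)/20) ((7-2*s)/20) (A 0) (A 1) (A 3) (A 4),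
      cmb_mem (by decide) (by decide) (by decide) (by decide) _ _ _, ?_⟩
    intro i hi
    fin_cases i
    · refine dist_eq_of_sq r_pos.le ?_
      norm_num [A, P0, P1, P2, P3, P4, cmb_apply, u]
      linear_combination ((109/320:ℝ) + (-17/200:ℝ)*s + (1/100:ℝ)*s^2) * hs + ((1/16:ℝ)) * hw - hr2
    · refine dist_eq_of_sq r_pos.le ?_
      norm_num [A, P0, P1, P2, P3, P4, cmb_apply, u]
      linear_combination ((109/320:ℝ) + (-17/200:ℝ)*s + (1/100:ℝ)*s^2) * hs + ((1/16:ℝ)) * hw - hr2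
    · exact absurd rfl hi
    · refine dist_eq_of_sq r_pos.le ?_
      norm_num [A, P0, P1, P2, P3, P4, cmb_apply, u]
      linear_combination ((29/320:ℝ) + (23/200:ℝ)*s + (1/100:ℝ)*s^2) * hs + ((1/16:ℝ)) * hw - hr2
    · refine dist_eq_of_sq r_pos.le ?_
      norm_num [A, P0, P1, P2, P3, P4, cmb_apply, u]
      linear_combination ((-11/320:ℝ) + (3/200:ℝ)*s + (1/100:ℝ)*s^2) * hs + ((25/16:ℝ)) * hw - hr2
  · refine ⟨cmb ((9+s)/20) ((9+s)/20) ((7-2*s)/20) (A 0) (A 1) (A 2) (A 4),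
      cmb_mem (by decide) (by decide) (by decide) (by decide) _ _ _, ?_⟩
    intro i hi
    fin_cases i
    · refine dist_eq_of_sq r_pos.le ?_
      norm_num [A, P0, P1, P2, P3, P4, cmb_apply, u]
      linear_combination ((109/320:ℝ) + (-17/200:ℝ)*s + (1/100:ℝ)*s^2) * hs + ((1/16:ℝ)) * hw - hr2
    · refine dist_eq_of_sq r_pos.le ?_
      norm_num [A, P0, P1, P2, P3, P4, cmb_apply, u]
      linear_combination ((109/320:ℝ) + (-17/200:ℝ)*s + (1/100:ℝ)*s^2) * hs + ((1/16:ℝ)) * hw - hr2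
    · refine dist_eq_of_sq r_pos.le ?_
      norm_num [A, P0, P1, P2, P3, P4, cmb_apply, u]
      linear_combination ((29/320:ℝ) + (23/200:ℝ)*s + (1/100:ℝ)*s^2) * hs + ((1/16:ℝ)) * hw - hr2
    · exact absurd rfl hi
    · refine dist_eq_of_sq r_pos.le ?_
      norm_num [A, P0, P1, P2, P3, P4, cmb_apply, u]
      linear_combination ((-11/320:ℝ) + (3/200:ℝ)*s + (1/100:ℝ)*s^2) * hs + ((25/16:ℝ)) * hw - hr2
  · refine ⟨cmb (1/4) (1/4) (1/4) (A 0) (A 1) (A 2) (A 3),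
      cmb_mem (by decide) (by decide) (by decide) (by decide) _ _ _, ?_⟩
    intro i hi
    fin_cases i
    · refine dist_eq_of_sq r_pos.le ?_
      norm_num [A, P0, P1, P2, P3, P4, cmb_apply, u]
      linear_combination ((1/4:ℝ)) * hs - hr2
    · refine dist_eq_of_sq r_pos.le ?_
      norm_num [A, P0, P1, P2, P3, P4, cmb_apply, u]
      linear_combination ((1/4:ℝ)) * hs - hr2
    · refine dist_eq_of_sq r_pos.le ?_
      norm_num [A, P0, P1, P2, P3, P4, cmb_apply, u]
      linear_combination ((1/4:ℝ)) * hs - hr2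
    · refine dist_eq_of_sq r_pos.le ?_
      norm_num [A, P0, P1, P2, P3, P4, cmb_apply, u]
      linear_combination ((1/4:ℝ)) * hs - hr2
    · exact absurd rfl hi

lemma A14_ne : A 1 ≠ A 4 := by
  intro h
  have h3 := congrArg (fun v : Pt 4 => v 3) h
  simp only [A, P1, P4, Matrix.cons_val_one, Matrix.head_cons, Matrix.cons_val_four,
    Matrix.cons_val_zero, Matrix.cons_val_two, Matrix.cons_val_three, Matrix.tail_cons,
      PiLp.toLp_apply] at h3
  exact ω_pos.ne h3

set_option maxHeartbeats 2000000 in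
lemma A_not_equifacetal : ¬ Equifacetal A := by
  intro h
  obtain ⟨f, hf⟩ := h 4 0
  have h1 : A 1 ∈ A '' {i | i ≠ (0 : Fin 5)} := ⟨1, by simp, rfl⟩
  have h4 : A 4 ∈ A '' {i | i ≠ (0 : Fin 5)} := ⟨4, by simp, rfl⟩
  rw [← hf] at h1 h4
  obtain ⟨x, hx, hfx⟩ := h1
  obtain ⟨y, hy, hfy⟩ := h4
  obtain ⟨i, hi, rfl⟩ := hx
  obtain ⟨i', hi', rfl⟩ := hy
  have hne : A i ≠ A i' := by
    intro hEq
    rw [hEq] at hfx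
    exact A14_ne (hfx.symm.trans hfy)
  have hdist : dist (A i) (A i') = dist (A 1) (A 4) := by
    rw [← hfx, ← hfy, f.dist_eq]
  have hsq : dist (A i) (A i') ^ 2 = dist (A 1) (A 4) ^ 2 := by rw [hdist]
  rw [dist_sq, dist_sq] at hsq
  have hi5 : i ≠ (4 : Fin 5) := hi
  have hi5' : i' ≠ (4 : Fin 5) := hi'
  fin_cases i <;> fin_cases i' <;>
    first
      | exact hi5 rfl
      | exact hi5' rfl
      | exact hne rfl
      | (norm_num [A, P0, P1, P2, P3, P4] at hsq;
         nlinarith [hs, hu2, hw, s_gt, s_lt, sq_nonneg (3*s - 8)])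

end EHM

/-- answer to Devidé's question. There is a 4-simplex which
is both equiareal and equiradial but not equifacetal. -/
theorem statement17 :
    ∃ A : Fin 5 → Pt 4, AffineIndependent ℝ A ∧ Equiareal A ∧ Equiradial A ∧
      ¬ Equifacetal A :=
  ⟨EHM.A, EHM.A_indep, EHM.A_equiareal, EHM.A_equiradial, EHM.A_not_equifacetal⟩
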